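/- Let u(x) = e^{|x|} on ℝ and w = χ_{(0,1)}, so W(t) = min(t,1). Then for every interval Q ⊂ ℝ and measurable E ⊂ Q, W(u(Q))/|Q| ≤ C · W(u(E))/|E| for an absolute constant C, where u(A) = ∫_A e^{|x|} dx. In particular this holds even though u is not a doubling weight. -/

import Mathlib

open MeasureTheory Set
open scoped ENNReal NNReal

/-- `u(A) = ∫_A e^{|x|} dx`. -/
noncomputable def uexp (A : Set ℝ) : ℝ≥0∞ :=
  ∫⁻ x in A, ENNReal.ofReal (Real.exp |x|)

lemma uexp_mono {s t : Set ℝ} (h : s ⊆ t) : uexp s ≤ uexp t :=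
  lintegral_mono_set h

lemma uexp_lower {s : Set ℝ} (hs : MeasurableSet s) {m : ℝ}
    (h : ∀ x ∈ s, m ≤ Real.exp |x|) :
    ENNReal.ofReal m * volume s ≤ uexp s := by
  rw [← setLIntegral_const s (ENNReal.ofReal m)]
  exact setLIntegral_mono' hs fun x hx => ENNReal.ofReal_le_ofReal (h x hx)

lemma uexp_upper {s : Set ℝ} (hs : MeasurableSet s) {M : ℝ}
    (h : ∀ x ∈ s, Real.exp |x| ≤ M) :
    uexp s ≤ ENNReal.ofReal M * volume s := by
  rw [← setLIntegral_const s (ENNReal.ofReal M)]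
  exact setLIntegral_mono' hs fun x hx => ENNReal.ofReal_le_ofReal (h x hx)

/-- For `u(x) = e^{|x|}` on `ℝ` and `W(t) = min(t,1)` (coming from `w = χ_{(0,1)}`):
`W(u(Q))/|Q| ≤ C W(u(E))/|E|` for every interval `Q` and measurable `E ⊆ Q`, with an
absolute constant `C` — even though `u` is not a doubling weight. -/
theorem stmt17 :
    (∃ C : ℝ≥0, ∀ a b : ℝ, a < b → ∀ E : Set ℝ, E ⊆ Set.Ioo a b → MeasurableSet E →
      volume E ≠ 0 →
      min (uexp (Set.Ioo a b)) 1 / volume (Set.Ioo a b) ≤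
        C * (min (uexp E) 1 / volume E)) ∧
    ¬ (∃ C : ℝ≥0, ∀ c r : ℝ, 0 < r →
      uexp (Set.Ioo (c - 2 * r) (c + 2 * r)) ≤ C * uexp (Set.Ioo (c - r) (c + r))) := by
  constructor
  · refine ⟨3, fun a b hab E hEQ hEm hE0 => ?_⟩
    have hC : ((3 : ℝ≥0) : ℝ≥0∞) = (3 : ℝ≥0∞) := by norm_cast
    rw [hC]
    set vQ := volume (Set.Ioo a b) with hvQ
    set vE := volume E with hvE
    have hvQval : vQ = ENNReal.ofReal (b - a) := Real.volume_Ioo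
    have hvQ0 : vQ ≠ 0 := by
      rw [hvQval]; simpa using sub_pos.mpr hab
    have hvQt : vQ ≠ ∞ := by rw [hvQval]; exact ENNReal.ofReal_ne_top
    have hvEQ : vE ≤ vQ := measure_mono hEQ
    have hvEt : vE ≠ ∞ := fun h => hvQt (top_le_iff.mp (h ▸ hvEQ))
    have hEsub : uexp E ≤ uexp (Set.Ioo a b) := uexp_mono hEQ
    rcases le_or_gt 1 (uexp E) with h1 | h1
    · -- u(E) ≥ 1 : both minima are 1
      rw [min_eq_right h1, min_eq_right (le_trans h1 hEsub)]
      calc (1 : ℝ≥0∞) / vQ ≤ 1 / vE := ENNReal.div_le_div_left hvEQ 1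
        _ ≤ 3 * (1 / vE) := le_mul_of_one_le_left zero_le (by norm_num)
    · rw [min_eq_left h1.le]
      set d := max 0 (max a (-b)) with hd
      have hd0 : 0 ≤ d := le_max_left _ _
      have hda : a ≤ d := le_trans (le_max_left _ _) (le_max_right _ _)
      have hdb : -b ≤ d := le_trans (le_max_right _ _) (le_max_right _ _)
      have hdx : ∀ x ∈ Set.Ioo a b, d ≤ |x| := by
        intro x hx
        refine max_le (abs_nonneg x) (max_le ?_ ?_)
        · exact le_trans hx.1.le (le_abs_self x)
        · exact le_trans (by linarith [hx.2]) (neg_le_abs x)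
      have hxd : ∀ x ∈ Set.Ioo a b, |x| ≤ d + (b - a) := by
        intro x hx
        rw [abs_le]
        constructor <;> [linarith [hx.1]; linarith [hx.2]]
      have lower : ENNReal.ofReal (Real.exp d) * vE ≤ uexp E :=
        uexp_lower hEm fun x hx =>
          Real.exp_le_exp.mpr (hdx x (hEQ hx))
      have key : ENNReal.ofReal (Real.exp d) ≤ uexp E / vE :=
        (ENNReal.le_div_iff_mul_le (Or.inl hE0) (Or.inl hvEt)).mpr lower
      have main : min (uexp (Set.Ioo a b)) 1 / vQ ≤ 3 * ENNReal.ofReal (Real.exp d) := by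
        rcases le_or_gt (b - a) 1 with hba | hba
        · have up : uexp (Set.Ioo a b) ≤ ENNReal.ofReal (Real.exp (d + (b - a))) * vQ :=
            uexp_upper measurableSet_Ioo fun x hx => Real.exp_le_exp.mpr (hxd x hx)
          calc min (uexp (Set.Ioo a b)) 1 / vQ
              ≤ (ENNReal.ofReal (Real.exp (d + (b - a))) * vQ) / vQ :=
                ENNReal.div_le_div (le_trans (min_le_left _ _) up) le_rfl
            _ = ENNReal.ofReal (Real.exp (d + (b - a))) := by
                rw [mul_div_assoc, ENNReal.div_self hvQ0 hvQt, mul_one]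
            _ ≤ ENNReal.ofReal (3 * Real.exp d) := by
                apply ENNReal.ofReal_le_ofReal
                rw [Real.exp_add]
                have h1 : Real.exp (b - a) ≤ Real.exp 1 := Real.exp_le_exp.mpr hba
                have h2 : Real.exp 1 < 2.7182818286 := Real.exp_one_lt_d9
                have h3 : (0:ℝ) < Real.exp d := Real.exp_pos d
                nlinarith
            _ = 3 * ENNReal.ofReal (Real.exp d) := by
                rw [ENNReal.ofReal_mul (by norm_num), ENNReal.ofReal_ofNat]
        · have hQ1 : (1 : ℝ≥0∞) ≤ vQ := by
            rw [hvQval, ← ENNReal.ofReal_one]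
            exact ENNReal.ofReal_le_ofReal hba.le
          have hed : (1 : ℝ≥0∞) ≤ ENNReal.ofReal (Real.exp d) := by
            rw [← ENNReal.ofReal_one]
            exact ENNReal.ofReal_le_ofReal (Real.one_le_exp hd0)
          calc min (uexp (Set.Ioo a b)) 1 / vQ ≤ 1 / 1 :=
                ENNReal.div_le_div (min_le_right _ _) hQ1
            _ = 1 := by norm_num
            _ ≤ 3 * ENNReal.ofReal (Real.exp d) := by
                calc (1:ℝ≥0∞) = 1 * 1 := (one_mul 1).symm
                  _ ≤ 3 * ENNReal.ofReal (Real.exp d) := mul_le_mul' (by norm_num) hed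
      exact le_trans main (mul_le_mul_right key 3)
  · rintro ⟨C, hC⟩
    set r : ℝ := 8 * (C : ℝ) + 2 with hr
    have hC0 : (0:ℝ) ≤ (C:ℝ) := C.coe_nonneg
    have hrpos : (0:ℝ) < r := by positivity
    have h := hC 0 r hrpos
    -- lower bound for the big interval
    have hsub : Set.Ioo (2 * r - 1) (2 * r) ⊆ Set.Ioo (0 - 2 * r) (0 + 2 * r) :=
      Set.Ioo_subset_Ioo (by linarith) (by linarith)
    have hlow : ENNReal.ofReal (Real.exp (2 * r - 1)) ≤
        uexp (Set.Ioo (0 - 2 * r) (0 + 2 * r)) := by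
      have h1 : ENNReal.ofReal (Real.exp (2 * r - 1)) * volume (Set.Ioo (2 * r - 1) (2 * r)) ≤
          uexp (Set.Ioo (2 * r - 1) (2 * r)) := by
        apply uexp_lower measurableSet_Ioo
        intro x hx
        apply Real.exp_le_exp.mpr
        calc 2 * r - 1 ≤ x := hx.1.le
          _ ≤ |x| := le_abs_self x
      have h2 : volume (Set.Ioo (2 * r - 1) (2 * r)) = 1 := by
        rw [Real.volume_Ioo]; norm_num
      rw [h2, mul_one] at h1
      exact le_trans h1 (uexp_mono hsub)
    -- upper bound for the small interval
    have hup : uexp (Set.Ioo (0 - r) (0 + r)) ≤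
        ENNReal.ofReal (Real.exp r) * ENNReal.ofReal (2 * r) := by
      have := uexp_upper (s := Set.Ioo (0 - r) (0 + r)) measurableSet_Ioo
        (M := Real.exp r) (fun x hx => Real.exp_le_exp.mpr (by
          rw [abs_le]; constructor <;> [linarith [hx.1]; linarith [hx.2]]))
      calc uexp (Set.Ioo (0 - r) (0 + r)) ≤
          ENNReal.ofReal (Real.exp r) * volume (Set.Ioo (0 - r) (0 + r)) := this
        _ = ENNReal.ofReal (Real.exp r) * ENNReal.ofReal (2 * r) := by
            rw [Real.volume_Ioo]; ring_nf
    have hcoe : (C : ℝ≥0∞) = ENNReal.ofReal (C : ℝ) := ENNReal.ofReal_coe_nnreal.symm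
    have hfinal : ENNReal.ofReal (Real.exp (2 * r - 1)) ≤
        ENNReal.ofReal ((C : ℝ) * (Real.exp r * (2 * r))) := by
      calc ENNReal.ofReal (Real.exp (2 * r - 1)) ≤
          uexp (Set.Ioo (0 - 2 * r) (0 + 2 * r)) := hlow
        _ ≤ C * uexp (Set.Ioo (0 - r) (0 + r)) := h
        _ ≤ C * (ENNReal.ofReal (Real.exp r) * ENNReal.ofReal (2 * r)) :=
            mul_le_mul_right hup C
        _ = ENNReal.ofReal ((C : ℝ) * (Real.exp r * (2 * r))) := by
            rw [hcoe, ← ENNReal.ofReal_mul (by positivity), ← ENNReal.ofReal_mul hC0]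
    have hreal : Real.exp (2 * r - 1) ≤ (C : ℝ) * (Real.exp r * (2 * r)) :=
      (ENNReal.ofReal_le_ofReal_iff (by positivity)).mp hfinal
    -- contradiction: exp (r-1) > 2 C r
    have hkey : 2 * (C : ℝ) * r < Real.exp (r - 1) := by
      have h1 : (r - 1) / 2 + 1 ≤ Real.exp ((r - 1) / 2) := Real.add_one_le_exp _
      have h2 : Real.exp ((r - 1) / 2) * Real.exp ((r - 1) / 2) = Real.exp (r - 1) := by
        rw [← Real.exp_add]; ring_nf
      nlinarith [Real.exp_pos ((r - 1) / 2)]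
    have hsplit : Real.exp (2 * r - 1) = Real.exp r * Real.exp (r - 1) := by
      rw [← Real.exp_add]; ring_nf
    nlinarith [Real.exp_pos r, mul_lt_mul_of_pos_left hkey (Real.exp_pos r)]
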